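/- Let S_A: S² → ℝ be a smooth function on an open subset of the unit sphere satisfying cos(S_A(X)/2) = (1 + B·C + (B+C)·X)/√(f_A(X)) and sin(S_A(X)/2) = det M(B,C,X)/√(f_A(X)), where f_A(X) = 2(1+B·C)(1+B·X)(1+C·X) and B, C are fixed unit vectors. Then for any tangent vector v to S² at X, -det M(B,C,X) · dS_A(v) = [1 - C·(X+B)/(1+B·X)]·(B·v) + [1 - B·(X+C)/(1+C·X)]·(C·v). -/

import Mathlib

open Matrix

/-- The 3×3 matrix whose columns are the vectors A, B, C. -/
def colMat (A B C : Fin 3 → ℝ) : Matrix (Fin 3) (Fin 3) ℝ :=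
  Matrix.of fun i j => ![A, B, C] j i

/-- `f_A(X) = 2(1 + B·C)(1 + B·X)(1 + C·X)`. -/
def fA (B C X : Fin 3 → ℝ) : ℝ := 2 * (1 + B ⬝ᵥ C) * (1 + B ⬝ᵥ X) * (1 + C ⬝ᵥ X)

private lemma hasDerivAt_dot (w : Fin 3 → ℝ) {γ : ℝ → Fin 3 → ℝ} {v : Fin 3 → ℝ} {t : ℝ}
    (h : HasDerivAt γ v t) : HasDerivAt (fun s => w ⬝ᵥ γ s) (w ⬝ᵥ v) t := by
  simp only [dotProduct]
  exact HasDerivAt.fun_sum fun i _ => ((hasDerivAt_pi.mp h) i).const_mul (w i)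

/-- Differentiating the spherical-triangle area `S_A` with respect to the vertex `X`
along any curve on the sphere through `X` with velocity `v`. -/
theorem dSA_formula (B C X v : Fin 3 → ℝ) (SA : (Fin 3 → ℝ) → ℝ) (γ : ℝ → Fin 3 → ℝ)
    (hB : B ⬝ᵥ B = 1) (hC : C ⬝ᵥ C = 1) (hX : X ⬝ᵥ X = 1)
    (hBX : 1 + B ⬝ᵥ X > 0) (hCX : 1 + C ⬝ᵥ X > 0)
    (hdet : (colMat B C X).det ≠ 0)
    -- `SA` satisfies the Euler and Tuynman formulas on the sphere near X
    (hEq : ∀ Y : Fin 3 → ℝ, Y ⬝ᵥ Y = 1 → 1 + B ⬝ᵥ Y > 0 → 1 + C ⬝ᵥ Y > 0 →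
      Real.cos (SA Y / 2) = (1 + B ⬝ᵥ C + (B + C) ⬝ᵥ Y) / Real.sqrt (fA B C Y) ∧
      Real.sin (SA Y / 2) = (colMat B C Y).det / Real.sqrt (fA B C Y))
    -- γ is a curve on the sphere through X with velocity v at t = 0
    (hγ0 : γ 0 = X) (hsph : ∀ t, γ t ⬝ᵥ γ t = 1)
    (hγ : HasDerivAt γ v 0)
    (hdiff : DifferentiableAt ℝ (fun t => SA (γ t)) 0) :
    -(colMat B C X).det * deriv (fun t => SA (γ t)) 0 =
      (1 - C ⬝ᵥ (X + B) / (1 + B ⬝ᵥ X)) * (B ⬝ᵥ v)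
        + (1 - B ⬝ᵥ (X + C) / (1 + C ⬝ᵥ X)) * (C ⬝ᵥ v) := by
  -- abbreviations
  set D : ℝ := (colMat B C X).det with hD
  set s : ℝ := Real.sqrt (fA B C X) with hs
  obtain ⟨hcosX, hsinX⟩ := hEq X hX hBX hCX
  -- s ≠ 0
  have hs0 : s ≠ 0 := by
    intro h0
    have h1 : Real.cos (SA X / 2) = 0 := by rw [hcosX, ← hs, h0, div_zero]
    have h2 : Real.sin (SA X / 2) = 0 := by rw [hsinX, ← hs, h0, div_zero]
    have := Real.sin_sq_add_cos_sq (SA X / 2)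
    rw [h1, h2] at this; norm_num at this
  have hFpos : 0 < fA B C X := by
    rcases lt_trichotomy (fA B C X) 0 with h | h | h
    · exact absurd (Real.sqrt_eq_zero_of_nonpos h.le) hs0
    · exact absurd (by rw [hs, h, Real.sqrt_zero]) hs0
    · exact h
  have hssq : s ^ 2 = fA B C X := Real.sq_sqrt hFpos.le
  have hspos : 0 < s := Real.sqrt_pos.mpr hFpos
  have hfA : fA B C X = 2 * (1 + B ⬝ᵥ C) * (1 + B ⬝ᵥ X) * (1 + C ⬝ᵥ X) := rfl
  have hk : 0 < 1 + B ⬝ᵥ C := by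
    rw [hfA] at hFpos
    nlinarith [mul_pos hBX hCX]
  -- derivatives of the dot products along γ
  have hdB : HasDerivAt (fun t => B ⬝ᵥ γ t) (B ⬝ᵥ v) 0 := hasDerivAt_dot B hγ
  have hdC : HasDerivAt (fun t => C ⬝ᵥ γ t) (C ⬝ᵥ v) 0 := hasDerivAt_dot C hγ
  have hdBC : HasDerivAt (fun t => (B + C) ⬝ᵥ γ t) ((B + C) ⬝ᵥ v) 0 := hasDerivAt_dot (B + C) hγ
  -- derivative of F(t) := fA B C (γ t)
  have hγ0B : B ⬝ᵥ γ 0 = B ⬝ᵥ X := by rw [hγ0]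
  have hγ0C : C ⬝ᵥ γ 0 = C ⬝ᵥ X := by rw [hγ0]
  have hdF : HasDerivAt (fun t => fA B C (γ t))
      (2 * (1 + B ⬝ᵥ C) * ((B ⬝ᵥ v) * (1 + C ⬝ᵥ X) + (1 + B ⬝ᵥ X) * (C ⬝ᵥ v))) 0 := by
    have h1 : HasDerivAt (fun t => 1 + B ⬝ᵥ γ t) (B ⬝ᵥ v) 0 := by
      exact hdB.const_add 1
    have h2 : HasDerivAt (fun t => 1 + C ⬝ᵥ γ t) (C ⬝ᵥ v) 0 := by
      exact hdC.const_add 1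
    have h3 := ((h1.mul h2).const_mul (2 * (1 + B ⬝ᵥ C)))
    have : (fun t => fA B C (γ t)) = fun t => 2 * (1 + B ⬝ᵥ C) * ((1 + B ⬝ᵥ γ t) * (1 + C ⬝ᵥ γ t)) := by
      funext t; simp [fA]; ring
    rw [this]
    rw [hγ0B, hγ0C] at h3
    exact h3
  set F' : ℝ := 2 * (1 + B ⬝ᵥ C) * ((B ⬝ᵥ v) * (1 + C ⬝ᵥ X) + (1 + B ⬝ᵥ X) * (C ⬝ᵥ v)) with hF'
  have hF00 : fA B C (γ 0) = fA B C X := by rw [hγ0]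
  -- derivative of √F
  have hdsF : HasDerivAt (fun t => Real.sqrt (fA B C (γ t))) (F' / (2 * s)) 0 := by
    have := hdF.sqrt (by rw [hF00]; exact hFpos.ne')
    rwa [hF00, ← hs] at this
  -- derivative of N(t) := 1 + B⬝C + (B+C)⬝γ t
  have hdN : HasDerivAt (fun t => 1 + B ⬝ᵥ C + (B + C) ⬝ᵥ γ t) ((B + C) ⬝ᵥ v) 0 := by
    exact hdBC.const_add (1 + B ⬝ᵥ C)
  set N : ℝ := 1 + B ⬝ᵥ C + (B + C) ⬝ᵥ X with hN
  have hN0 : 1 + B ⬝ᵥ C + (B + C) ⬝ᵥ γ 0 = N := by rw [hγ0]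
  -- derivative of the quotient φ(t) = N(t)/√F(t)
  set c' : ℝ := (((B + C) ⬝ᵥ v) * s - N * (F' / (2 * s))) / s ^ 2 with hc'
  have hdφ : HasDerivAt (fun t => (1 + B ⬝ᵥ C + (B + C) ⬝ᵥ γ t) / Real.sqrt (fA B C (γ t))) c' 0 := by
    have := hdN.div hdsF (by rw [hF00, ← hs]; exact hs0)
    rwa [hF00, ← hs, hN0] at this
  -- the cosine function agrees with φ near 0
  have hev : (fun t => Real.cos (SA (γ t) / 2)) =ᶠ[nhds 0]
      (fun t => (1 + B ⬝ᵥ C + (B + C) ⬝ᵥ γ t) / Real.sqrt (fA B C (γ t))) := by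
    have hcB : ContinuousAt (fun t => 1 + B ⬝ᵥ γ t) 0 :=
      ((hasDerivAt_const 0 (1:ℝ)).add hdB).continuousAt
    have hcC : ContinuousAt (fun t => 1 + C ⬝ᵥ γ t) 0 :=
      ((hasDerivAt_const 0 (1:ℝ)).add hdC).continuousAt
    have h1 : ∀ᶠ t in nhds 0, 0 < 1 + B ⬝ᵥ γ t := by
      have : (fun t => 1 + B ⬝ᵥ γ t) 0 ∈ Set.Ioi (0:ℝ) := by simpa [hγ0B] using hBX
      exact hcB.eventually_mem (Ioi_mem_nhds (by simpa [hγ0B] using hBX))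
    have h2 : ∀ᶠ t in nhds 0, 0 < 1 + C ⬝ᵥ γ t :=
      hcC.eventually_mem (Ioi_mem_nhds (by simpa [hγ0C] using hCX))
    filter_upwards [h1, h2] with t ht1 ht2
    exact (hEq (γ t) (hsph t) ht1 ht2).1
  -- derivative of the cosine function, two ways
  have hdg : HasDerivAt (fun t => SA (γ t)) (deriv (fun t => SA (γ t)) 0) 0 := hdiff.hasDerivAt
  set g' : ℝ := deriv (fun t => SA (γ t)) 0 with hg'
  have hdcos : HasDerivAt (fun t => Real.cos (SA (γ t) / 2))
      (-Real.sin (SA (γ 0) / 2) * (g' / 2)) 0 := (hdg.div_const 2).cos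
  have hdcos2 : HasDerivAt (fun t => Real.cos (SA (γ t) / 2)) c' 0 :=
    hdφ.congr_of_eventuallyEq hev
  have hkey : -Real.sin (SA X / 2) * (g' / 2) = c' := by
    have := hdcos.unique hdcos2
    rwa [hγ0] at this
  rw [hsinX, ← hs, ← hD] at hkey
  -- now pure algebra
  have hDg : -D * g' = 2 * s * c' := by
    rw [← hkey]
    field_simp
  rw [hg'] at hDg ⊢
  rw [hDg, hc']
  have hBCv : (B + C) ⬝ᵥ v = B ⬝ᵥ v + C ⬝ᵥ v := add_dotProduct B C v
  have hBCX : (B + C) ⬝ᵥ X = B ⬝ᵥ X + C ⬝ᵥ X := add_dotProduct B C X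
  have hCXB : C ⬝ᵥ (X + B) = C ⬝ᵥ X + B ⬝ᵥ C := by
    rw [dotProduct_add, dotProduct_comm C B]
  have hBXC : B ⬝ᵥ (X + C) = B ⬝ᵥ X + B ⬝ᵥ C := by rw [dotProduct_add]
  rw [hN, hF', hBCv, hBCX, hCXB, hBXC]
  set a : ℝ := B ⬝ᵥ C
  set b : ℝ := B ⬝ᵥ X
  set c : ℝ := C ⬝ᵥ X
  set bv : ℝ := B ⬝ᵥ v
  set cv : ℝ := C ⬝ᵥ v
  have hb : (1:ℝ) + b ≠ 0 := ne_of_gt hBX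
  have hcne : (1:ℝ) + c ≠ 0 := ne_of_gt hCX
  have step : 2 * s * (((bv + cv) * s -
      (1 + a + (b + c)) * (2 * (1 + a) * (bv * (1 + c) + (1 + b) * cv) / (2 * s))) / s ^ 2)
      = 2 * (bv + cv) - (1 + a + (b + c)) * (2 * (1 + a) * (bv * (1 + c) + (1 + b) * cv)) / s ^ 2 := by
    field_simp
  rw [step, hssq, hfA]
  field_simp
  ring
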